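/- For all real t and b with t ≤ b, one has exp(t) ≤ 1 + t + g₂(b)·t²/2, where g₂(b) = 2(e^b - 1 - b)/b² (with g₂(0) = 1). -/

import Mathlib

noncomputable def g2 (t : ℝ) : ℝ := if t = 0 then 1 else 2 * (Real.exp t - 1 - t) / t ^ 2

noncomputable def I2 (x : ℝ) : ℝ := ∫ s in (0:ℝ)..1, (1 - s) * Real.exp (s * x)

lemma I2_eq (x : ℝ) (hx : x ≠ 0) : I2 x = (Real.exp x - 1 - x) / x ^ 2 := by
  have key : ∀ s : ℝ, HasDerivAt (fun s : ℝ => (1 - s) * Real.exp (s * x) / x + Real.exp (s * x) / x ^ 2)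
      ((1 - s) * Real.exp (s * x)) s := by
    intro s
    have hexp : HasDerivAt (fun s : ℝ => Real.exp (s * x)) (Real.exp (s * x) * x) s := by
      have := (Real.hasDerivAt_exp (s * x)).comp s ((hasDerivAt_id s).mul_const x)
      simpa [Function.comp_def] using this
    have h1 : HasDerivAt (fun s : ℝ => (1 - s)) (0 - 1) s :=
      (hasDerivAt_const s (1:ℝ)).sub (hasDerivAt_id s)
    have := (((h1.mul hexp).div_const x).add (hexp.div_const (x ^ 2)))
    refine this.congr_deriv ?_
    field_simp
    ring
  have hInt : IntervalIntegrable (fun s : ℝ => (1 - s) * Real.exp (s * x)) MeasureTheory.volume 0 1 := by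
    apply Continuous.intervalIntegrable
    continuity
  have := intervalIntegral.integral_eq_sub_of_hasDerivAt (fun s _ => key s) hInt
  rw [I2, this]
  field_simp
  simp only [mul_zero, Real.exp_zero]
  ring

lemma g2_eq (b : ℝ) : g2 b = 2 * I2 b := by
  by_cases hb : b = 0
  · subst hb
    simp only [g2, if_pos rfl, I2]
    norm_num
    rw [intervalIntegral.integral_sub intervalIntegrable_const
        (Continuous.intervalIntegrable (by continuity) 0 1)]
    simp
    norm_num
  · rw [g2, if_neg hb, I2_eq b hb]
    ring

theorem exp_le_quadratic (t b : ℝ) (h : t ≤ b) :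
    Real.exp t ≤ 1 + t + g2 b * t ^ 2 / 2 := by
  have hident : Real.exp t - 1 - t = t ^ 2 * I2 t := by
    by_cases ht : t = 0
    · subst ht; simp
    · rw [I2_eq t ht]; field_simp
  have hmono : I2 t ≤ I2 b := by
    apply intervalIntegral.integral_mono_on (by norm_num)
      (Continuous.intervalIntegrable (by continuity) 0 1)
      (Continuous.intervalIntegrable (by continuity) 0 1)
    intro s hs
    rcases hs with ⟨hs0, hs1⟩
    have h1 : Real.exp (s * t) ≤ Real.exp (s * b) :=
      Real.exp_le_exp.2 (mul_le_mul_of_nonneg_left h hs0)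
    have h2 : (0:ℝ) ≤ 1 - s := by linarith
    exact mul_le_mul_of_nonneg_left h1 h2
  have : Real.exp t - 1 - t ≤ t ^ 2 * I2 b := by
    rw [hident]
    exact mul_le_mul_of_nonneg_left hmono (sq_nonneg t)
  rw [g2_eq]
  nlinarith [sq_nonneg t]
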